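/- There exists a constant C > 0 with the following property. For every α ∈ (0, π/2], set q₁ := (1,0,0), q₂ := (cos α, sin α, 0), Q := {q₁, −q₁, q₂, −q₂}, and define G : ℝ³ → [0,∞) by G(0) := 0 and G(x) := dist(x/‖x‖, Q) for x ≠ 0. Then there exist T > 0 and a twice continuously differentiable map u : ℝ → ℝ³ with ‖u(t)‖ = 1 for all t, whose chirality w := u × u' satisfies w(t) = q₁ for every t ≤ 0, w(t) = q₂ for every t ≥ T, and ∫_ℝ [(‖w(t)‖² − 1)² + G(w(t))/2 + ‖w'(t)‖²] dt ≤ C·‖q₁ − q₂‖. (Hence the soft-penalized transition energy h_G(q₁,q₂) is at most C‖q₁ − q₂‖, uniformly in α.) -/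

import Mathlib

open MeasureTheory Filter
open scoped Classical
open scoped RealInnerProductSpace ContDiff

/-- The cross product on Euclidean `ℝ³`. -/
noncomputable def cross3 (a b : EuclideanSpace ℝ (Fin 3)) : EuclideanSpace ℝ (Fin 3) :=
  (WithLp.equiv 2 (Fin 3 → ℝ)).symm
    (crossProduct ((WithLp.equiv 2 (Fin 3 → ℝ)) a) ((WithLp.equiv 2 (Fin 3 → ℝ)) b))

namespace Stmt11Helper

noncomputable def v3 (a b c : ℝ) : EuclideanSpace ℝ (Fin 3) :=
  (WithLp.equiv 2 (Fin 3 → ℝ)).symm ![a, b, c]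

lemma v3_congr {a b c d e f : ℝ} (h1 : a = d) (h2 : b = e) (h3 : c = f) :
    v3 a b c = v3 d e f := by rw [h1, h2, h3]

lemma cross3_v3 (a b c d e f : ℝ) :
    cross3 (v3 a b c) (v3 d e f) = v3 (b*f - c*e) (c*d - a*f) (a*e - b*d) := by
  unfold cross3 v3
  rw [Equiv.apply_symm_apply, Equiv.apply_symm_apply, cross_apply]
  ext i
  fin_cases i <;> simp [WithLp.equiv_symm_apply, PiLp.toLp_apply]

lemma v3_sub (a b c d e f : ℝ) : v3 a b c - v3 d e f = v3 (a-d) (b-e) (c-f) := by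
  unfold v3
  ext i
  fin_cases i <;> simp [WithLp.equiv_symm_apply, PiLp.toLp_apply]

lemma v3_zero : v3 0 0 0 = 0 := by
  unfold v3
  ext i
  fin_cases i <;> simp [WithLp.equiv_symm_apply, PiLp.toLp_apply]

lemma norm_v3 (a b c : ℝ) : ‖v3 a b c‖ = Real.sqrt (a^2 + b^2 + c^2) := by
  rw [EuclideanSpace.norm_eq]
  congr 1
  simp [v3, Fin.sum_univ_three, WithLp.equiv_symm_apply, PiLp.toLp_apply, Real.norm_eq_abs, sq_abs]

lemma norm_v3_sq (a b c : ℝ) : ‖v3 a b c‖^2 = a^2 + b^2 + c^2 := by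
  rw [norm_v3, Real.sq_sqrt (by positivity)]

lemma norm_v3_le (a b c : ℝ) : ‖v3 a b c‖ ≤ |a| + |b| + |c| := by
  rw [norm_v3]
  have h : a^2 + b^2 + c^2 ≤ (|a| + |b| + |c|)^2 := by
    nlinarith [sq_abs a, sq_abs b, sq_abs c, mul_nonneg (abs_nonneg a) (abs_nonneg b),
      mul_nonneg (abs_nonneg a) (abs_nonneg c), mul_nonneg (abs_nonneg b) (abs_nonneg c)]
  calc Real.sqrt (a^2+b^2+c^2) ≤ Real.sqrt ((|a|+|b|+|c|)^2) := Real.sqrt_le_sqrt h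
    _ = |a|+|b|+|c| := Real.sqrt_sq (by positivity)

lemma hasDerivAt_v3 {f g h : ℝ → ℝ} {f' g' h' : ℝ} {t : ℝ}
    (hf : HasDerivAt f f' t) (hg : HasDerivAt g g' t) (hh : HasDerivAt h h' t) :
    HasDerivAt (fun s => v3 (f s) (g s) (h s)) (v3 f' g' h') t := by
  have H : HasDerivAt (fun s => (![f s, g s, h s] : Fin 3 → ℝ)) ![f', g', h'] t := by
    rw [hasDerivAt_pi]
    intro i
    fin_cases i <;> simpa
  exact ((PiLp.continuousLinearEquiv 2 ℝ (fun _ : Fin 3 => ℝ)).symm.hasFDerivAt.comp_hasDerivAt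
    t H)

lemma contDiff_v3 {n : ℕ∞} {f g h : ℝ → ℝ} (hf : ContDiff ℝ n f) (hg : ContDiff ℝ n g)
    (hh : ContDiff ℝ n h) : ContDiff ℝ n (fun t => v3 (f t) (g t) (h t)) := by
  have H : ContDiff ℝ n (fun t => (![f t, g t, h t] : Fin 3 → ℝ)) := by
    rw [contDiff_pi]
    intro i
    fin_cases i <;> simpa
  exact ((PiLp.continuousLinearEquiv 2 ℝ (fun _ : Fin 3 => ℝ)).symm.contDiff).comp H

noncomputable def p : ℝ → ℝ := Real.smoothTransition

lemma p_contDiff : ContDiff ℝ ∞ p := Real.smoothTransition.contDiff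
lemma p_deriv_contDiff : ContDiff ℝ ∞ (deriv p) := (contDiff_infty_iff_deriv.mp p_contDiff).2
lemma p_deriv2_cont : Continuous (deriv (deriv p)) :=
  ((contDiff_infty_iff_deriv.mp p_deriv_contDiff).2).continuous
lemma p_hasDerivAt (t : ℝ) : HasDerivAt p (deriv p t) t :=
  ((p_contDiff.differentiable (by simp)) t).hasDerivAt
lemma p_deriv_hasDerivAt (t : ℝ) : HasDerivAt (deriv p) (deriv (deriv p) t) t :=
  ((p_deriv_contDiff.differentiable (by simp)) t).hasDerivAt

lemma p_deriv_zero_lt {t : ℝ} (h : t < 0) : deriv p t = 0 := by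
  have he : p =ᶠ[nhds t] fun _ => 0 :=
    eventually_of_mem (Iio_mem_nhds h) fun x hx =>
      Real.smoothTransition.zero_of_nonpos (le_of_lt hx)
  rw [he.deriv_eq, deriv_const]

lemma p_deriv_zero_gt {t : ℝ} (h : 1 < t) : deriv p t = 0 := by
  have he : p =ᶠ[nhds t] fun _ => 1 :=
    eventually_of_mem (Ioi_mem_nhds h) fun x hx =>
      Real.smoothTransition.one_of_one_le (le_of_lt hx)
  rw [he.deriv_eq, deriv_const]

lemma closed_ext {q : ℝ → ℝ} (hq : Continuous q) (h0 : ∀ t < 0, q t = 0)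
    (h1 : ∀ t > 1, q t = 0) : (∀ t ≤ 0, q t = 0) ∧ (∀ t : ℝ, 1 ≤ t → q t = 0) := by
  have hc : IsClosed {t : ℝ | q t = 0} := isClosed_eq hq continuous_const
  constructor
  · intro t ht
    have h : closure (Set.Iio (0:ℝ)) ⊆ {t : ℝ | q t = 0} :=
      hc.closure_subset_iff.mpr fun x hx => h0 x hx
    exact h (by rwa [closure_Iio])
  · intro t ht
    have h : closure (Set.Ioi (1:ℝ)) ⊆ {t : ℝ | q t = 0} :=
      hc.closure_subset_iff.mpr fun x hx => h1 x hx
    exact h (by rwa [closure_Ioi])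

lemma p_deriv_zero : (∀ t ≤ (0:ℝ), deriv p t = 0) ∧ (∀ t : ℝ, 1 ≤ t → deriv p t = 0) :=
  closed_ext p_deriv_contDiff.continuous (fun _ h => p_deriv_zero_lt h)
    (fun _ h => p_deriv_zero_gt h)

lemma p_deriv2_zero : (∀ t ≤ (0:ℝ), deriv (deriv p) t = 0) ∧
    (∀ t : ℝ, 1 ≤ t → deriv (deriv p) t = 0) := by
  apply closed_ext p_deriv2_cont
  · intro t ht
    have he : deriv p =ᶠ[nhds t] fun _ => 0 :=
      eventually_of_mem (Iio_mem_nhds ht) fun x hx => p_deriv_zero_lt hx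
    rw [he.deriv_eq, deriv_const]
  · intro t ht
    have he : deriv p =ᶠ[nhds t] fun _ => 0 :=
      eventually_of_mem (Ioi_mem_nhds ht) fun x hx => p_deriv_zero_gt hx
    rw [he.deriv_eq, deriv_const]

lemma p_contDiff2 : ContDiff ℝ 2 p := by
  have h := Real.smoothTransition.contDiff (n := 2)
  exact_mod_cast h

lemma p_bound : ∃ B : ℝ, 1 ≤ B ∧ (∀ t, |deriv p t| ≤ B) ∧ (∀ t, |deriv (deriv p) t| ≤ B) := by
  have hs1 : HasCompactSupport (deriv p) := by
    apply HasCompactSupport.intro (isCompact_Icc (a := (0:ℝ)) (b := 1))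
    intro x hx
    simp only [Set.mem_Icc, not_and_or, not_le] at hx
    rcases hx with h | h
    · exact p_deriv_zero_lt h
    · exact p_deriv_zero_gt h
  have hs2 : HasCompactSupport (deriv (deriv p)) := by
    apply HasCompactSupport.intro (isCompact_Icc (a := (0:ℝ)) (b := 1))
    intro x hx
    simp only [Set.mem_Icc, not_and_or, not_le] at hx
    rcases hx with h | h
    · exact p_deriv2_zero.1 x (le_of_lt h)
    · exact p_deriv2_zero.2 x (le_of_lt h)
  obtain ⟨B1, hB1⟩ := hs1.exists_bound_of_continuous p_deriv_contDiff.continuous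
  obtain ⟨B2, hB2⟩ := hs2.exists_bound_of_continuous p_deriv2_cont
  refine ⟨max 1 (max B1 B2), le_max_left _ _, fun t => ?_, fun t => ?_⟩
  · calc |deriv p t| = ‖deriv p t‖ := rfl
      _ ≤ B1 := hB1 t
      _ ≤ _ := le_trans (le_max_left _ _) (le_max_right _ _)
  · calc |deriv (deriv p) t| = ‖deriv (deriv p) t‖ := rfl
      _ ≤ B2 := hB2 t
      _ ≤ _ := le_trans (le_max_right _ _) (le_max_right _ _)

end Stmt11Helper

open Stmt11Helper

set_option maxHeartbeats 4000000 in
theorem stmt11 :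
    ∃ C : ℝ, 0 < C ∧ ∀ α ∈ Set.Ioc (0 : ℝ) (Real.pi / 2),
      ∀ q₁ q₂ : EuclideanSpace ℝ (Fin 3), ∀ Q : Set (EuclideanSpace ℝ (Fin 3)),
      ∀ G : EuclideanSpace ℝ (Fin 3) → ℝ,
      q₁ = (WithLp.equiv 2 (Fin 3 → ℝ)).symm ![1, 0, 0] →
      q₂ = (WithLp.equiv 2 (Fin 3 → ℝ)).symm ![Real.cos α, Real.sin α, 0] →
      Q = {q₁, -q₁, q₂, -q₂} →
      (∀ x : EuclideanSpace ℝ (Fin 3),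
        G x = if x = 0 then 0 else Metric.infDist (‖x‖⁻¹ • x) Q) →
      ∃ T : ℝ, 0 < T ∧ ∃ u : ℝ → EuclideanSpace ℝ (Fin 3), ContDiff ℝ 2 u ∧
        (∀ t : ℝ, ‖u t‖ = 1) ∧
        (∀ t : ℝ, t ≤ 0 → cross3 (u t) (deriv u t) = q₁) ∧
        (∀ t : ℝ, T ≤ t → cross3 (u t) (deriv u t) = q₂) ∧
        (∫⁻ t : ℝ, ENNReal.ofReal ((‖cross3 (u t) (deriv u t)‖ ^ 2 - 1) ^ 2
            + G (cross3 (u t) (deriv u t)) / 2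
            + ‖deriv (fun s => cross3 (u s) (deriv u s)) t‖ ^ 2)
          ≤ ENNReal.ofReal (C * ‖q₁ - q₂‖)) := by
  classical
  obtain ⟨B, hB1, hBp, hBp2⟩ := Stmt11Helper.p_bound
  set M : ℝ := B * (4 + 2*B) with hM_def
  set K : ℝ := 8*B^4 + (2*B^2 + 3*B + 2) + 18*M^2 with hK_def
  have hB0 : (0:ℝ) < B := lt_of_lt_of_le one_pos hB1
  have hM0 : 0 < M := by positivity
  have hK0 : 0 < K := by positivity
  refine ⟨2*K, by positivity, ?_⟩
  intro α hα q₁ q₂ Q G hq₁ hq₂ hQ hG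
  obtain ⟨hα0, hαle⟩ := hα
  have hα2 : α ≤ 2 := le_trans hαle (by linarith [Real.pi_le_four])
  have hq1v : q₁ = v3 1 0 0 := hq₁
  have hq2v : q₂ = v3 (Real.cos α) (Real.sin α) 0 := hq₂
  have hq1Q : v3 1 0 0 ∈ Q := by
    rw [hQ, ← hq1v]
    exact Set.mem_insert _ _
  have hq2Q : v3 (Real.cos α) (Real.sin α) 0 ∈ Q := by
    rw [hQ, ← hq2v]
    exact Set.mem_insert_iff.mpr (Or.inr (Set.mem_insert_iff.mpr
      (Or.inr (Set.mem_insert _ _))))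
  have hq1norm : ‖v3 (1:ℝ) 0 0‖ = 1 := by
    rw [norm_v3]
    norm_num
  have hq2norm : ‖v3 (Real.cos α) (Real.sin α) 0‖ = 1 := by
    rw [norm_v3]
    have h : Real.cos α^2 + Real.sin α^2 + 0^2 = 1 := by
      linear_combination Real.sin_sq_add_cos_sq α
    rw [h, Real.sqrt_one]
  have habs : ∀ x y X Y : ℝ, |x| ≤ X → |y| ≤ Y → |x*y| ≤ X*Y := by
    intro x y X Y hx hy
    rw [abs_mul]
    exact mul_le_mul hx hy (abs_nonneg _) (le_trans (abs_nonneg _) hx)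
  set β : ℝ → ℝ := fun t => α * p t with hβ_def
  have hβD : ∀ t, HasDerivAt β (α * deriv p t) t := fun t => (p_hasDerivAt t).const_mul α
  have hsinβ : ∀ t, HasDerivAt (fun t => Real.sin (β t)) (Real.cos (β t) * (α * deriv p t)) t :=
    fun t => (Real.hasDerivAt_sin (β t)).comp t (hβD t)
  have hcosβ : ∀ t, HasDerivAt (fun t => Real.cos (β t)) (-Real.sin (β t) * (α * deriv p t)) t :=
    fun t => (Real.hasDerivAt_cos (β t)).comp t (hβD t)
  set u : ℝ → EuclideanSpace ℝ (Fin 3) := fun t =>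
    v3 (-(Real.cos t * Real.sin (β t))) (Real.cos t * Real.cos (β t)) (Real.sin t) with hu_def
  set du : ℝ → EuclideanSpace ℝ (Fin 3) := fun t =>
    v3 (Real.sin t * Real.sin (β t) - α * deriv p t * (Real.cos t * Real.cos (β t)))
      (-(Real.sin t * Real.cos (β t)) - α * deriv p t * (Real.cos t * Real.sin (β t)))
      (Real.cos t) with hdu_def
  have huD : ∀ t, HasDerivAt u (du t) t := by
    intro t
    refine hasDerivAt_v3 ?_ ?_ (Real.hasDerivAt_sin t)
    · have h := ((Real.hasDerivAt_cos t).mul (hsinβ t)).neg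
      exact h.congr_deriv (by ring)
    · have h := (Real.hasDerivAt_cos t).mul (hcosβ t)
      exact h.congr_deriv (by ring)
  have hu_deriv : ∀ t, deriv u t = du t := fun t => (huD t).deriv
  set W : ℝ → EuclideanSpace ℝ (Fin 3) := fun t =>
    v3 (Real.cos (β t) + α * deriv p t * (Real.sin t * Real.cos t * Real.sin (β t)))
      (Real.sin (β t) - α * deriv p t * (Real.sin t * Real.cos t * Real.cos (β t)))
      (α * deriv p t * Real.cos t ^ 2) with hW_def
  have hcross : ∀ t, cross3 (u t) (deriv u t) = W t := by
    intro t
    rw [hu_deriv t]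
    show cross3 (v3 _ _ _) (v3 _ _ _) = v3 _ _ _
    rw [cross3_v3]
    refine v3_congr ?_ ?_ ?_
    · linear_combination Real.cos (β t) * Real.sin_sq_add_cos_sq t
    · linear_combination Real.sin (β t) * Real.sin_sq_add_cos_sq t
    · linear_combination (α * deriv p t * Real.cos t^2) * Real.sin_sq_add_cos_sq (β t)
  have hWnorm_sq : ∀ t, ‖W t‖^2 = 1 + (α * deriv p t * Real.cos t)^2 := by
    intro t
    show ‖v3 _ _ _‖^2 = _
    rw [norm_v3_sq]
    linear_combination (1 + (α*deriv p t*Real.sin t*Real.cos t)^2) * Real.sin_sq_add_cos_sq (β t)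
      + ((α*deriv p t)^2 * Real.cos t^2) * Real.sin_sq_add_cos_sq t
  have hWnorm_ge1 : ∀ t, 1 ≤ ‖W t‖ := by
    intro t
    nlinarith [hWnorm_sq t, norm_nonneg (W t), sq_nonneg (α * deriv p t * Real.cos t)]
  have hA : ∀ t, HasDerivAt (fun t => α * deriv p t) (α * deriv (deriv p) t) t :=
    fun t => (p_deriv_hasDerivAt t).const_mul α
  set dW : ℝ → EuclideanSpace ℝ (Fin 3) := fun t =>
    v3 (α * deriv (deriv p) t * (Real.sin t * Real.cos t * Real.sin (β t))
        + α * deriv p t * ((Real.cos t^2 - Real.sin t^2) * Real.sin (β t)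
          + Real.sin t * Real.cos t * (Real.cos (β t) * (α * deriv p t)))
        - α * deriv p t * Real.sin (β t))
      (α * deriv p t * Real.cos (β t)
        - (α * deriv (deriv p) t * (Real.sin t * Real.cos t * Real.cos (β t))
          + α * deriv p t * ((Real.cos t^2 - Real.sin t^2) * Real.cos (β t)
            - Real.sin t * Real.cos t * (Real.sin (β t) * (α * deriv p t)))))
      (α * deriv (deriv p) t * Real.cos t ^ 2
        - α * deriv p t * (2 * Real.sin t * Real.cos t)) with hdW_def
  have h_scS : ∀ t, HasDerivAt (fun t => Real.sin t * Real.cos t * Real.sin (β t))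
      ((Real.cos t^2 - Real.sin t^2) * Real.sin (β t)
        + Real.sin t * Real.cos t * (Real.cos (β t) * (α * deriv p t))) t := by
    intro t
    have h := ((Real.hasDerivAt_sin t).mul (Real.hasDerivAt_cos t)).mul (hsinβ t)
    exact h.congr_deriv (by simp only [Pi.mul_apply]; ring)
  have h_scC : ∀ t, HasDerivAt (fun t => Real.sin t * Real.cos t * Real.cos (β t))
      ((Real.cos t^2 - Real.sin t^2) * Real.cos (β t)
        - Real.sin t * Real.cos t * (Real.sin (β t) * (α * deriv p t))) t := by
    intro t
    have h := ((Real.hasDerivAt_sin t).mul (Real.hasDerivAt_cos t)).mul (hcosβ t)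
    exact h.congr_deriv (by simp only [Pi.mul_apply]; ring)
  have hWD : ∀ t, HasDerivAt W (dW t) t := by
    intro t
    refine hasDerivAt_v3 ?_ ?_ ?_
    · have h := (hcosβ t).add ((hA t).mul (h_scS t))
      exact h.congr_deriv (by ring)
    · have h := (hsinβ t).sub ((hA t).mul (h_scC t))
      exact h.congr_deriv (by ring)
    · have h := (hA t).mul ((Real.hasDerivAt_cos t).pow 2)
      exact h.congr_deriv (by simp only [Pi.pow_apply]; ring)
  have hAbd : ∀ t, |α * deriv p t| ≤ 2*B := by
    intro t
    rw [abs_mul, abs_of_pos hα0]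
    exact mul_le_mul hα2 (hBp t) (abs_nonneg _) (by norm_num)
  have hAbd' : ∀ t, |α * deriv p t| ≤ α*B := by
    intro t
    rw [abs_mul, abs_of_pos hα0]
    exact mul_le_mul_of_nonneg_left (hBp t) hα0.le
  have hA2bd : ∀ t, |α * deriv (deriv p) t| ≤ α*B := by
    intro t
    rw [abs_mul, abs_of_pos hα0]
    exact mul_le_mul_of_nonneg_left (hBp2 t) hα0.le
  have hcs2 : ∀ t : ℝ, |Real.cos t^2 - Real.sin t^2| ≤ 2 := by
    intro t
    have h1 := Real.sin_sq_le_one t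
    have h2 := Real.cos_sq_le_one t
    have h3 := sq_nonneg (Real.sin t)
    have h4 := sq_nonneg (Real.cos t)
    rw [abs_le]
    constructor <;> nlinarith
  have hdWbd : ∀ t, ‖dW t‖ ≤ 3*(α*M) := by
    intro t
    show ‖v3 _ _ _‖ ≤ _
    refine le_trans (norm_v3_le _ _ _) ?_
    have hs1 : |Real.sin t| ≤ 1 := Real.abs_sin_le_one t
    have hc1 : |Real.cos t| ≤ 1 := Real.abs_cos_le_one t
    have hS1 : |Real.sin (β t)| ≤ 1 := Real.abs_sin_le_one (β t)
    have hC1 : |Real.cos (β t)| ≤ 1 := Real.abs_cos_le_one (β t)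
    have hcossq : |Real.cos t ^ 2| ≤ 1 := by
      rw [abs_of_nonneg (sq_nonneg _)]
      exact Real.cos_sq_le_one t
    have e1 : |α * deriv (deriv p) t * (Real.sin t * Real.cos t * Real.sin (β t))
        + α * deriv p t * ((Real.cos t^2 - Real.sin t^2) * Real.sin (β t)
          + Real.sin t * Real.cos t * (Real.cos (β t) * (α * deriv p t)))
        - α * deriv p t * Real.sin (β t)|
        ≤ (α*B*(1*1*1) + α*B*(2*1 + 1*1*(1*(2*B)))) + α*B*1 := by
      refine le_trans (abs_sub _ _) (add_le_add (le_trans (abs_add_le _ _) (add_le_add ?_ ?_)) ?_)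
      · exact habs _ _ _ _ (hA2bd t) (habs _ _ _ _ (habs _ _ _ _ hs1 hc1) hS1)
      · refine habs _ _ _ _ (hAbd' t) (le_trans (abs_add_le _ _) (add_le_add ?_ ?_))
        · exact habs _ _ _ _ (hcs2 t) hS1
        · exact habs _ _ _ _ (habs _ _ _ _ hs1 hc1) (habs _ _ _ _ hC1 (hAbd t))
      · exact habs _ _ _ _ (hAbd' t) hS1
    have e2 : |α * deriv p t * Real.cos (β t)
        - (α * deriv (deriv p) t * (Real.sin t * Real.cos t * Real.cos (β t))
          + α * deriv p t * ((Real.cos t^2 - Real.sin t^2) * Real.cos (β t)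
            - Real.sin t * Real.cos t * (Real.sin (β t) * (α * deriv p t))))|
        ≤ α*B*1 + (α*B*(1*1*1) + α*B*(2*1 + 1*1*(1*(2*B)))) := by
      refine le_trans (abs_sub _ _) (add_le_add ?_ (le_trans (abs_add_le _ _) (add_le_add ?_ ?_)))
      · exact habs _ _ _ _ (hAbd' t) hC1
      · exact habs _ _ _ _ (hA2bd t) (habs _ _ _ _ (habs _ _ _ _ hs1 hc1) hC1)
      · refine habs _ _ _ _ (hAbd' t) (le_trans (abs_sub _ _) (add_le_add ?_ ?_))
        · exact habs _ _ _ _ (hcs2 t) hC1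
        · exact habs _ _ _ _ (habs _ _ _ _ hs1 hc1) (habs _ _ _ _ hS1 (hAbd t))
    have e3 : |α * deriv (deriv p) t * Real.cos t ^ 2
        - α * deriv p t * (2 * Real.sin t * Real.cos t)| ≤ α*B*1 + α*B*(2*1*1) := by
      refine le_trans (abs_sub _ _) (add_le_add ?_ ?_)
      · exact habs _ _ _ _ (hA2bd t) hcossq
      · refine habs _ _ _ _ (hAbd' t) ?_
        have h2 : |(2:ℝ)| ≤ 2 := by norm_num
        exact habs _ _ _ _ (habs _ _ _ _ h2 hs1) hc1
    have hfin : (α*B*(1*1*1) + α*B*(2*1 + 1*1*(1*(2*B)))) + α*B*1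
        + (α*B*1 + (α*B*(1*1*1) + α*B*(2*1 + 1*1*(1*(2*B)))))
        + (α*B*1 + α*B*(2*1*1)) ≤ 3*(α*M) := by
      rw [hM_def]
      nlinarith [hα0.le, hB0.le, mul_nonneg hα0.le hB0.le]
    linarith [e1, e2, e3]
  
  have hW_left : ∀ t : ℝ, t ≤ 0 → W t = v3 1 0 0 := by
    intro t ht
    have hp0 : p t = 0 := Real.smoothTransition.zero_of_nonpos ht
    have hp'0 : deriv p t = 0 := p_deriv_zero.1 t ht
    show v3 _ _ _ = _
    have hβ0 : β t = 0 := by rw [hβ_def]; simp [hp0]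
    refine v3_congr ?_ ?_ ?_ <;> simp [hβ0, hp'0]
  have hW_right : ∀ t : ℝ, 1 ≤ t → W t = v3 (Real.cos α) (Real.sin α) 0 := by
    intro t ht
    have hp0 : p t = 1 := Real.smoothTransition.one_of_one_le ht
    have hp'0 : deriv p t = 0 := p_deriv_zero.2 t ht
    show v3 _ _ _ = _
    have hβ0 : β t = α := by rw [hβ_def]; simp [hp0]
    refine v3_congr ?_ ?_ ?_ <;> simp [hβ0, hp'0]
  have hdW_out : ∀ t : ℝ, t ≤ 0 ∨ 1 ≤ t → dW t = 0 := by
    intro t ht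
    have hp'0 : deriv p t = 0 := by
      rcases ht with h | h
      · exact p_deriv_zero.1 t h
      · exact p_deriv_zero.2 t h
    have hp''0 : deriv (deriv p) t = 0 := by
      rcases ht with h | h
      · exact p_deriv2_zero.1 t h
      · exact p_deriv2_zero.2 t h
    show v3 _ _ _ = _
    rw [← v3_zero]
    refine v3_congr ?_ ?_ ?_ <;> rw [hp'0, hp''0] <;> ring
  have hβge : ∀ t, 0 ≤ β t := fun t =>
    mul_nonneg hα0.le (Real.smoothTransition.nonneg _)
  have hβle : ∀ t, β t ≤ α := fun t =>
    mul_le_of_le_one_right hα0.le (Real.smoothTransition.le_one _)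
  have hG_W : ∀ t, G (W t) ≤ α * (2*B^2 + 3*B + 2) := by
    intro t
    have hN1 := hWnorm_ge1 t
    have hNpos : (0:ℝ) < ‖W t‖ := lt_of_lt_of_le one_pos hN1
    have hW0 : W t ≠ 0 := by
      intro h
      rw [h, norm_zero] at hNpos
      exact lt_irrefl _ hNpos
    rw [hG (W t), if_neg hW0]
    refine le_trans (Metric.infDist_le_dist_of_mem hq1Q) ?_
    rw [dist_eq_norm]
    have hsplit : ‖W t‖⁻¹ • W t - v3 1 0 0 =
        (‖W t‖⁻¹ • W t - W t) + ((W t - v3 (Real.cos (β t)) (Real.sin (β t)) 0)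
          + (v3 (Real.cos (β t)) (Real.sin (β t)) 0 - v3 1 0 0)) := by abel
    rw [hsplit]
    refine le_trans (norm_add_le _ _) (le_trans (add_le_add_right (norm_add_le _ _) _) ?_)
    have hsq1 : (α * deriv p t * Real.cos t)^2 ≤ α^2 * B^2 := by
      have h := habs _ _ _ _ (hAbd' t) (Real.abs_cos_le_one t)
      calc (α * deriv p t * Real.cos t)^2 = |α * deriv p t * Real.cos t|^2 :=
            (sq_abs _).symm
        _ ≤ (α*B*1)^2 := by
            apply pow_le_pow_left₀ (abs_nonneg _) h
        _ = α^2 * B^2 := by ring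
    have hpiece1 : ‖‖W t‖⁻¹ • W t - W t‖ ≤ 2*(α*B^2) := by
      have heq : ‖W t‖⁻¹ • W t - W t = (‖W t‖⁻¹ - 1) • W t := by
        rw [sub_smul, one_smul]
      rw [heq, norm_smul, Real.norm_eq_abs]
      have hinv : ‖W t‖⁻¹ ≤ 1 := by
        rw [inv_le_one_iff₀]
        right; exact hN1
      have habs1 : |‖W t‖⁻¹ - 1| = 1 - ‖W t‖⁻¹ := by
        rw [abs_of_nonpos (by linarith)]
        ring
      rw [habs1]
      have heq2 : (1 - ‖W t‖⁻¹) * ‖W t‖ = ‖W t‖ - 1 := by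
        field_simp
      rw [heq2]
      have hle : ‖W t‖ - 1 ≤ ‖W t‖^2 - 1 := by nlinarith
      have hval : ‖W t‖^2 - 1 = (α * deriv p t * Real.cos t)^2 := by
        rw [hWnorm_sq t]; ring
      nlinarith [hα2, hα0.le, hB0.le]
    have hpiece2 : ‖W t - v3 (Real.cos (β t)) (Real.sin (β t)) 0‖ ≤ 3*(α*B) := by
      have heq : W t - v3 (Real.cos (β t)) (Real.sin (β t)) 0 =
          v3 (α * deriv p t * (Real.sin t * Real.cos t * Real.sin (β t)))
            (-(α * deriv p t * (Real.sin t * Real.cos t * Real.cos (β t))))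
            (α * deriv p t * Real.cos t ^ 2) := by
        show v3 _ _ _ - _ = _
        rw [v3_sub]
        exact v3_congr (by ring) (by ring) (by ring)
      rw [heq]
      refine le_trans (norm_v3_le _ _ _) ?_
      have hb1 : |α * deriv p t * (Real.sin t * Real.cos t * Real.sin (β t))| ≤ α*B*(1*1*1) :=
        habs _ _ _ _ (hAbd' t) (habs _ _ _ _ (habs _ _ _ _ (Real.abs_sin_le_one t)
          (Real.abs_cos_le_one t)) (Real.abs_sin_le_one (β t)))
      have hb2 : |-(α * deriv p t * (Real.sin t * Real.cos t * Real.cos (β t)))| ≤ α*B*(1*1*1) := by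
        rw [abs_neg]
        exact habs _ _ _ _ (hAbd' t) (habs _ _ _ _ (habs _ _ _ _ (Real.abs_sin_le_one t)
          (Real.abs_cos_le_one t)) (Real.abs_cos_le_one (β t)))
      have hb3 : |α * deriv p t * Real.cos t ^ 2| ≤ α*B*1 := by
        refine habs _ _ _ _ (hAbd' t) ?_
        rw [abs_of_nonneg (sq_nonneg _)]
        exact Real.cos_sq_le_one t
      linarith
    have hpiece3 : ‖v3 (Real.cos (β t)) (Real.sin (β t)) 0 - v3 1 0 0‖ ≤ 2*α := by
      rw [v3_sub]
      refine le_trans (norm_v3_le _ _ _) ?_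
      have hcb1 : Real.cos (β t) ≤ 1 := Real.cos_le_one _
      have hb1 : |Real.cos (β t) - 1| ≤ α := by
        rw [abs_of_nonpos (by linarith), neg_sub]
        have hhalf : Real.sin (β t / 2)^2 = 1/2 - Real.cos (2*(β t/2))/2 :=
          Real.sin_sq_eq_half_sub (β t / 2)
        have h2x : 2*(β t/2) = β t := by ring
        rw [h2x] at hhalf
        have hsq := Real.sin_sq_le_sq (x := β t / 2)
        have h1 := hβge t
        have h2 := hβle t
        nlinarith
      have hb2 : |Real.sin (β t) - 0| ≤ α := by
        rw [sub_zero]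
        refine le_trans (Real.abs_sin_le_abs) ?_
        rw [abs_of_nonneg (hβge t)]
        exact hβle t
      have hb3 : |(0:ℝ) - 0| = 0 := by simp
      linarith
    nlinarith [hα0.le, hB0.le]
  have hpoint : ∀ t, (‖W t‖^2 - 1)^2 + G (W t)/2 + ‖dW t‖^2 ≤ α * K := by
    intro t
    have hsq1 : (α * deriv p t * Real.cos t)^2 ≤ α^2 * B^2 := by
      have h := habs _ _ _ _ (hAbd' t) (Real.abs_cos_le_one t)
      calc (α * deriv p t * Real.cos t)^2 = |α * deriv p t * Real.cos t|^2 :=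
            (sq_abs _).symm
        _ ≤ (α*B*1)^2 := by
            apply pow_le_pow_left₀ (abs_nonneg _) h
        _ = α^2 * B^2 := by ring
    have h1 : (‖W t‖^2 - 1)^2 ≤ 8*α*B^4 := by
      rw [hWnorm_sq t]
      have heq : (1 + (α * deriv p t * Real.cos t)^2 - 1)^2
          = ((α * deriv p t * Real.cos t)^2)^2 := by ring
      rw [heq]
      have hα3 : α^3 ≤ 8 := by nlinarith
      nlinarith [sq_nonneg (α * deriv p t * Real.cos t), hB0.le, hα0.le,
        mul_nonneg hα0.le (pow_nonneg hB0.le 4), sq_nonneg (α*B)]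
    have h2 := hG_W t
    have h3 : ‖dW t‖^2 ≤ 18*α*M^2 := by
      have h := hdWbd t
      have hn := norm_nonneg (dW t)
      nlinarith [hα0.le, hα2, hM0.le, mul_nonneg hα0.le (mul_nonneg hM0.le hM0.le)]
    rw [hK_def]
    nlinarith [hα0.le]
  -- conclusion
  refine ⟨1, one_pos, u, ?_, ?_, ?_, ?_, ?_⟩
  · -- ContDiff
    have hp2 : ContDiff ℝ 2 p := p_contDiff2
    have hβ2 : ContDiff ℝ 2 β := by
      rw [hβ_def]
      exact contDiff_const.mul hp2
    have hsin2 : ContDiff ℝ 2 (fun t : ℝ => Real.sin t) := Real.contDiff_sin.of_le le_top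
    have hcos2 : ContDiff ℝ 2 (fun t : ℝ => Real.cos t) := Real.contDiff_cos.of_le le_top
    rw [hu_def]
    exact contDiff_v3 ((hcos2.mul (hsin2.comp hβ2)).neg) (hcos2.mul (hcos2.comp hβ2)) hsin2
  · intro t
    show ‖v3 _ _ _‖ = 1
    rw [norm_v3]
    have h : (-(Real.cos t * Real.sin (β t)))^2 + (Real.cos t * Real.cos (β t))^2
        + Real.sin t^2 = 1 := by
      linear_combination Real.cos t^2 * Real.sin_sq_add_cos_sq (β t) + Real.sin_sq_add_cos_sq t
    rw [h, Real.sqrt_one]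
  · intro t ht
    rw [hcross t, hW_left t ht, hq1v]
  · intro t ht
    rw [hcross t, hW_right t ht, hq2v]
  · have hfun : (fun s => cross3 (u s) (deriv u s)) = W := funext hcross
    have hderivW : ∀ t, deriv (fun s => cross3 (u s) (deriv u s)) t = dW t := by
      rw [hfun]
      exact fun t => (hWD t).deriv
    have hintegrand : ∀ t : ℝ, ((‖cross3 (u t) (deriv u t)‖^2 - 1)^2
        + G (cross3 (u t) (deriv u t))/2
        + ‖deriv (fun s => cross3 (u s) (deriv u s)) t‖^2)
        = ((‖W t‖^2 - 1)^2 + G (W t)/2 + ‖dW t‖^2) := by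
      intro t
      rw [hderivW t, hcross t]
    simp only [hintegrand]
    have hmono : ∀ t : ℝ, ENNReal.ofReal ((‖W t‖^2 - 1)^2 + G (W t)/2 + ‖dW t‖^2)
        ≤ (Set.Icc (0:ℝ) 1).indicator (fun _ => ENNReal.ofReal (α*K)) t := by
      intro t
      by_cases ht : t ∈ Set.Icc (0:ℝ) 1
      · rw [Set.indicator_of_mem ht]
        exact ENNReal.ofReal_le_ofReal (hpoint t)
      · rw [Set.indicator_of_notMem ht]
        have hout : t ≤ 0 ∨ 1 ≤ t := by
          rcases lt_or_ge t 0 with h | h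
          · exact Or.inl h.le
          · rcases le_or_gt 1 t with h1 | h1
            · exact Or.inr h1
            · exact absurd ⟨h, h1.le⟩ ht
        have hdw := hdW_out t hout
        have hGz : G (W t) = 0 := by
          rcases hout with h | h
          · rw [hW_left t h, hG, if_neg (by
              intro hz
              rw [hz, norm_zero] at hq1norm
              exact one_ne_zero hq1norm.symm), hq1norm, inv_one, one_smul]
            exact Metric.infDist_zero_of_mem hq1Q
          · rw [hW_right t h, hG, if_neg (by
              intro hz
              rw [hz, norm_zero] at hq2norm
              exact one_ne_zero hq2norm.symm), hq2norm, inv_one, one_smul]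
            exact Metric.infDist_zero_of_mem hq2Q
        have hnw : ‖W t‖ = 1 := by
          rcases hout with h | h
          · rw [hW_left t h]; exact hq1norm
          · rw [hW_right t h]; exact hq2norm
        rw [hGz, hdw, hnw]
        simp
    refine le_trans (lintegral_mono hmono) ?_
    rw [lintegral_indicator_const measurableSet_Icc, Real.volume_Icc]
    have hvol : ENNReal.ofReal ((1:ℝ) - 0) = 1 := by norm_num
    rw [hvol, mul_one]
    apply ENNReal.ofReal_le_ofReal
    have hsin_le : Real.sin α ≤ ‖q₁ - q₂‖ := by
      rw [hq1v, hq2v, v3_sub]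
      have hsn : 0 ≤ Real.sin α :=
        Real.sin_nonneg_of_nonneg_of_le_pi hα0.le (by linarith [Real.pi_pos])
      have h1 : Real.sin α = Real.sqrt (Real.sin α^2) := (Real.sqrt_sq hsn).symm
      rw [norm_v3, h1]
      apply Real.sqrt_le_sqrt
      nlinarith [sq_nonneg (1 - Real.cos α), sq_nonneg ((0:ℝ) - 0)]
    have hαle2 : α ≤ 2 * ‖q₁ - q₂‖ := by
      have h1 := Real.mul_le_sin hα0.le hαle
      have hπ : 0 < Real.pi := Real.pi_pos
      have h2 : Real.pi / 2 * (2 / Real.pi * α) ≤ Real.pi / 2 * Real.sin α :=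
        mul_le_mul_of_nonneg_left h1 (by positivity)
      have h3 : Real.pi / 2 * (2 / Real.pi * α) = α := by field_simp
      have hsn : 0 ≤ Real.sin α :=
        Real.sin_nonneg_of_nonneg_of_le_pi hα0.le (by linarith)
      have h4 : Real.pi / 2 * Real.sin α ≤ 2 * Real.sin α := by
        have := Real.pi_le_four
        nlinarith
      linarith
    nlinarith [hK0.le]
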